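/- Let L be a finite set, δ ∈ (0,1), w ≥ 0, W = w(1 − δ), I ≥ 0, and k, τ ∈ L. Let Q : L × L → ℝ be row-stochastic with a stationary distribution μ satisfying the IC condition μ_τ ≥ μ_i for all i ∈ L. Define the per-period payoff r_i = W + I·1{i = k} − I·1{i = τ} (the payoff of a driver of true type k who reported type τ and always provides service under PARM's compensation scheme c_{ij}^τ = W − I·1{i = τ}). Then the unique solution π of the value recursion π_i = r_i + δ ∑_j Q_{ij} π_j satisfies ∑_i μ_i π_i ≤ w; that is, averaged over the stationary distribution, a misreporting driver who always provides service earns no more than her outside option w. -/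

import Mathlib

open Finset

/-- Under PARM's compensation scheme, the per-period payoff of a driver of true type
`k` who reported type `τ` and always provides service is
`r_i = W + I·1{i = k} − I·1{i = τ}`. If the dispatch chain `Q` is row-stochastic with
stationary distribution `μ` satisfying the IC condition `μ_τ ≥ μ_i` for all `i`,
then any solution `π` of the value recursion satisfies `∑_i μ_i π_i ≤ w`. -/
theorem stmt9 {L : Type*} [Fintype L] [DecidableEq L]
    (δ w W I : ℝ) (hδ0 : 0 < δ) (hδ1 : δ < 1) (hw : 0 ≤ w)
    (hW : W = w * (1 - δ)) (hI : 0 ≤ I)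
    (k τ : L)
    (Q : L → L → ℝ) (hQ0 : ∀ i j, 0 ≤ Q i j) (hQ1 : ∀ i, (∑ j, Q i j) = 1)
    (μ : L → ℝ) (hμ0 : ∀ i, 0 ≤ μ i) (hμ1 : (∑ i, μ i) = 1)
    (hstat : ∀ j, (∑ i, μ i * Q i j) = μ j)
    (hIC : ∀ i, μ i ≤ μ τ)
    (r : L → ℝ)
    (hr : ∀ i, r i = W + (if i = k then I else 0) - (if i = τ then I else 0))
    (π : L → ℝ) (hπ : ∀ i, π i = r i + δ * ∑ j, Q i j * π j) :
    (∑ i, μ i * π i) ≤ w := by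
  set S := ∑ i, μ i * π i with hS
  have key : ∀ i, μ i * π i = μ i * r i + δ * ∑ j, μ i * Q i j * π j := by
    intro i
    rw [hπ i, mul_add]
    congr 1
    rw [mul_left_comm, Finset.mul_sum]
    simp [mul_assoc]
  have hrec : S = (∑ i, μ i * r i) + δ * S := by
    calc S = ∑ i, (μ i * r i + δ * ∑ j, μ i * Q i j * π j) := by
            rw [hS]; exact Finset.sum_congr rfl fun i _ => key i
      _ = (∑ i, μ i * r i) + δ * ∑ j, (∑ i, μ i * Q i j) * π j := by
            rw [Finset.sum_add_distrib, ← Finset.mul_sum, Finset.sum_comm]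
            simp [Finset.sum_mul]
      _ = (∑ i, μ i * r i) + δ * S := by simp only [hstat, hS]
  have hsum_r : (∑ i, μ i * r i) ≤ W := by
    have h2 : ∀ i, μ i * r i
        = μ i * W + μ i * (if i = k then I else 0) - μ i * (if i = τ then I else 0) :=
      fun i => by rw [hr i]; ring
    simp_rw [h2, mul_ite, mul_zero]
    rw [Finset.sum_sub_distrib, Finset.sum_add_distrib, Finset.sum_ite_eq',
      Finset.sum_ite_eq', ← Finset.sum_mul, hμ1]
    simp only [Finset.mem_univ, if_true, one_mul]
    nlinarith [hIC k]
  have h1δ : 0 < 1 - δ := by linarith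
  have hSle : S * (1 - δ) ≤ w * (1 - δ) := by nlinarith
  exact (mul_le_mul_iff_of_pos_right h1δ).mp hSle
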